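/- Let G be a group with elements g₂,…,g₅ and integers t₂₃₄, t₂₃₅, t₂₄₅, t₃₄₅ satisfying the listed commutator relations. Then for all integers a₂,…,a₅ and every natural number x: (g₂^{a₂}g₃^{a₃}g₄^{a₄}g₅^{a₅})^x = g₂^{k₂}g₃^{k₃}g₄^{k₄}g₅^{k₅}, where k₂ = x·a₂, k₃ = x·a₃, k₄ = x·a₄ + s₂(x)·a₂a₃t₂₃₄, and k₅ = x·a₅ + s₂(x)(a₂a₃t₂₃₅ + a₂a₄t₂₄₅ + a₃a₄t₃₄₅) + s₂(x)·a₂a₃t₂₃₄·(t₂₄₅((2x−1)a₂ − 3) + t₃₄₅((4x+1)a₃ − 3))/6. -/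

import Mathlib

/-- `s₂(x) = x(x-1)/2` -/
def s2 (x : ℤ) : ℤ := x * (x - 1) / 2

lemma two_dvd_mul_pred (y : ℤ) : (2:ℤ) ∣ y * (y - 1) := by
  have h := (Int.even_mul_succ_self (y-1)).two_dvd
  have e : (y-1)*(y-1+1) = y*(y-1) := by ring
  rwa [e] at h

lemma two_mul_s2 (y : ℤ) : 2 * s2 y = y * (y - 1) := by
  unfold s2
  exact Int.mul_ediv_cancel' (two_dvd_mul_pred y)

lemma s2_add_one (y : ℤ) : s2 (y + 1) = s2 y + y := by
  have h1 := two_mul_s2 (y+1)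
  have h2 := two_mul_s2 y
  have h3 : 2 * s2 (y+1) = 2 * (s2 y + y) := by linear_combination h1 - h2
  linarith

lemma mod2_aux : ∀ x a2 a3 t234 t245 t345 : ZMod 2,
    a2*a3*t234*(t245*((2*x-1)*a2-3)+t345*((4*x+1)*a3-3)) = 0 := by decide

lemma mod3_aux : ∀ x a2 a3 t234 t245 t345 : ZMod 3,
    x*(x-1)*(a2*a3*t234*(t245*((2*x-1)*a2-3)+t345*((4*x+1)*a3-3))) = 0 := by decide

lemma six_dvd (x a2 a3 t234 t245 t345 : ℤ) :
    (6:ℤ) ∣ s2 x * a2 * a3 * t234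
      * (t245 * ((2 * x - 1) * a2 - 3) + t345 * ((4 * x + 1) * a3 - 3)) := by
  set M : ℤ := a2*a3*t234*(t245 * ((2 * x - 1) * a2 - 3) + t345 * ((4 * x + 1) * a3 - 3)) with hM
  have hN : s2 x * a2 * a3 * t234
      * (t245 * ((2 * x - 1) * a2 - 3) + t345 * ((4 * x + 1) * a3 - 3)) = s2 x * M := by
    rw [hM]; ring
  rw [hN]
  have h2M : (2:ℤ) ∣ M := by
    have := (ZMod.intCast_zmod_eq_zero_iff_dvd M 2).mp ?_
    · exact this
    · push_cast [hM]
      exact mod2_aux _ _ _ _ _ _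
  have h2 : (2:ℤ) ∣ s2 x * M := h2M.mul_left (s2 x)
  have h3 : (3:ℤ) ∣ s2 x * M := by
    have h3' : (3:ℤ) ∣ x * (x-1) * M := by
      have := (ZMod.intCast_zmod_eq_zero_iff_dvd (x * (x-1) * M) 3).mp ?_
      · exact this
      · push_cast [hM]
        exact mod3_aux _ _ _ _ _ _
    have hx : x * (x-1) * M = 2 * (s2 x * M) := by
      rw [show x * (x-1) * M = (x*(x-1)) * M by ring, ← two_mul_s2 x]; ring
    rw [hx] at h3'
    rcases (Int.prime_three.dvd_mul.mp h3') with h | h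
    · norm_num at h
    · exact h
  obtain ⟨k, hk⟩ := h2
  obtain ⟨l, hl⟩ := h3
  exact ⟨k - l, by omega⟩

lemma conj_zpow' {G : Type*} [Group G] (a b : G) (m : ℤ) :
    b⁻¹ * a ^ m * b = (b⁻¹ * a * b) ^ m := by
  rw [show b⁻¹ * a * b = b⁻¹ * a * b⁻¹⁻¹ by rw [inv_inv], conj_zpow, inv_inv]

lemma swap_zpow {G : Type*} [Group G] {a b c : G} (h : b⁻¹ * a * b = a * c)
    (hac : Commute a c) (hbc : Commute b c) (m n : ℤ) :
    a ^ m * b ^ n = b ^ n * (a ^ m * c ^ (m * n)) := by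
  have hcbz : ∀ E : ℤ, c ^ E * b = b * c ^ E := fun E => ((hbc.symm).zpow_left E).eq
  have conj1 : ∀ k : ℤ, b⁻¹ * a ^ k * b = a ^ k * c ^ k := by
    intro k
    rw [conj_zpow', h, hac.mul_zpow]
  have conj1' : ∀ k : ℤ, b * a ^ k * b⁻¹ = a ^ k * c ^ (-k) := by
    intro k
    have e2 : a ^ k = (b * a ^ k * b⁻¹) * c ^ k := by
      calc a ^ k = b * (b⁻¹ * a ^ k * b) * b⁻¹ := by group
        _ = b * (a ^ k * c ^ k) * b⁻¹ := by rw [conj1 k]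
        _ = b * a ^ k * (c ^ k * b⁻¹) := by group
        _ = b * a ^ k * (b⁻¹ * c ^ k) := by
              rw [show c ^ k * b⁻¹ = b⁻¹ * c ^ k from ((hbc.symm.zpow_left k).inv_right).eq]
        _ = (b * a ^ k * b⁻¹) * c ^ k := by group
    calc b * a ^ k * b⁻¹ = (b * a ^ k * b⁻¹ * c ^ k) * (c ^ k)⁻¹ := by group
      _ = a ^ k * (c ^ k)⁻¹ := by rw [← e2]
      _ = a ^ k * c ^ (-k) := by rw [zpow_neg]
  have conjn : ∀ n : ℤ, ∀ k : ℤ, b ^ (-n) * a ^ k * b ^ n = a ^ k * c ^ (k * n) := by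
    intro n
    induction n using Int.induction_on with
    | zero => intro k; simp
    | succ i ih =>
        intro k
        calc b ^ (-(↑i+1):ℤ) * a ^ k * b ^ (↑i+1:ℤ)
            = b⁻¹ * (b ^ (-↑i:ℤ) * a ^ k * b ^ (↑i:ℤ)) * b := by group
          _ = b⁻¹ * (a ^ k * c ^ (k*↑i)) * b := by rw [ih k]
          _ = b⁻¹ * a ^ k * (c ^ (k*↑i) * b) := by group
          _ = b⁻¹ * a ^ k * (b * c ^ (k*↑i)) := by rw [hcbz (k*↑i)]
          _ = (b⁻¹ * a ^ k * b) * c ^ (k*↑i) := by group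
          _ = (a ^ k * c ^ k) * c ^ (k*↑i) := by rw [conj1 k]
          _ = a ^ k * c ^ (k*(↑i+1)) := by
                rw [mul_assoc, ← zpow_add, show k + k*(↑i:ℤ) = k*(↑i+1) by ring]
    | pred i ih =>
        intro k
        calc b ^ (-(-↑i-1):ℤ) * a ^ k * b ^ (-↑i-1:ℤ)
            = b * (b ^ (-(-↑i):ℤ) * a ^ k * b ^ (-↑i:ℤ)) * b⁻¹ := by group
          _ = b * (a ^ k * c ^ (k*(-↑i))) * b⁻¹ := by rw [ih k]
          _ = b * a ^ k * (c ^ (k*(-↑i)) * b⁻¹) := by group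
          _ = b * a ^ k * (b⁻¹ * c ^ (k*(-↑i))) := by
                rw [show c ^ (k*(-↑i)) * b⁻¹ = b⁻¹ * c ^ (k*(-↑i)) from
                  ((hbc.symm.zpow_left (k*(-↑i))).inv_right).eq]
          _ = (b * a ^ k * b⁻¹) * c ^ (k*(-↑i)) := by group
          _ = (a ^ k * c ^ (-k)) * c ^ (k*(-↑i)) := by rw [conj1' k]
          _ = a ^ k * c ^ (k*(-↑i-1)) := by
                rw [mul_assoc, ← zpow_add, show -k + k*(-↑i:ℤ) = k*(-↑i-1) by ring]
  calc a ^ m * b ^ n = b ^ n * (b ^ (-n) * a ^ m * b ^ n) := by group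
    _ = b ^ n * (a ^ m * c ^ (m * n)) := by rw [conjn n m]

lemma s2_zero : s2 0 = 0 := by decide

/-- Powering polynomials `k₂,…,k₅` for the subgroup `G₂ = ⟨g₂,…,g₅⟩`:
`(g₂^{a₂}g₃^{a₃}g₄^{a₄}g₅^{a₅})^x = g₂^{k₂}g₃^{k₃}g₄^{k₄}g₅^{k₅}` for natural `x`.
The division by `6` in `k₅` is exact. -/
theorem powering_polynomials_G2 (G : Type*) [Group G] (g2 g3 g4 g5 : G)
    (t234 t235 t245 t345 : ℤ)
    (h32 : g3⁻¹ * g2⁻¹ * g3 * g2 = g4 ^ t234 * g5 ^ t235)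
    (h42 : g4⁻¹ * g2⁻¹ * g4 * g2 = g5 ^ t245)
    (h43 : g4⁻¹ * g3⁻¹ * g4 * g3 = g5 ^ t345)
    (h52 : g5⁻¹ * g2⁻¹ * g5 * g2 = 1)
    (h53 : g5⁻¹ * g3⁻¹ * g5 * g3 = 1)
    (h54 : g5⁻¹ * g4⁻¹ * g5 * g4 = 1) :
    ∀ (a2 a3 a4 a5 : ℤ) (x : ℕ),
      (g2 ^ a2 * g3 ^ a3 * g4 ^ a4 * g5 ^ a5) ^ x
        = g2 ^ ((x : ℤ) * a2) * g3 ^ ((x : ℤ) * a3)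
            * g4 ^ ((x : ℤ) * a4 + s2 (x : ℤ) * a2 * a3 * t234)
            * g5 ^ ((x : ℤ) * a5
                    + s2 (x : ℤ) * (a2 * a3 * t235 + a2 * a4 * t245 + a3 * a4 * t345)
                    + s2 (x : ℤ) * a2 * a3 * t234
                        * (t245 * ((2 * (x : ℤ) - 1) * a2 - 3)
                           + t345 * ((4 * (x : ℤ) + 1) * a3 - 3)) / 6) := by
  -- basic commutations with the central element g5
  have c52e : g5 * g2 = g2 * g5 := by
    calc g5 * g2 = (g2 * g5) * (g5⁻¹ * g2⁻¹ * g5 * g2) := by group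
      _ = g2 * g5 := by rw [h52, mul_one]
  have c53e : g5 * g3 = g3 * g5 := by
    calc g5 * g3 = (g3 * g5) * (g5⁻¹ * g3⁻¹ * g5 * g3) := by group
      _ = g3 * g5 := by rw [h53, mul_one]
  have c54e : g5 * g4 = g4 * g5 := by
    calc g5 * g4 = (g4 * g5) * (g5⁻¹ * g4⁻¹ * g5 * g4) := by group
      _ = g4 * g5 := by rw [h54, mul_one]
  have C25 : Commute g2 g5 := c52e.symm
  have C35 : Commute g3 g5 := c53e.symm
  have C45 : Commute g4 g5 := c54e.symm
  have c52zz : ∀ E K : ℤ, g5 ^ E * g2 ^ K = g2 ^ K * g5 ^ E :=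
    fun E K => ((C25.symm).zpow_zpow E K).eq
  have c53zz : ∀ E K : ℤ, g5 ^ E * g3 ^ K = g3 ^ K * g5 ^ E :=
    fun E K => ((C35.symm).zpow_zpow E K).eq
  have c54zz : ∀ E K : ℤ, g5 ^ E * g4 ^ K = g4 ^ K * g5 ^ E :=
    fun E K => ((C45.symm).zpow_zpow E K).eq
  -- conjugation relations
  have r42 : g2⁻¹ * g4 * g2 = g4 * g5 ^ t245 := by
    calc g2⁻¹ * g4 * g2 = g4 * (g4⁻¹ * g2⁻¹ * g4 * g2) := by group
      _ = g4 * g5 ^ t245 := by rw [h42]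
  have r43 : g3⁻¹ * g4 * g3 = g4 * g5 ^ t345 := by
    calc g3⁻¹ * g4 * g3 = g4 * (g4⁻¹ * g3⁻¹ * g4 * g3) := by group
      _ = g4 * g5 ^ t345 := by rw [h43]
  have r32 : g2⁻¹ * g3 * g2 = g3 * (g4 ^ t234 * g5 ^ t235) := by
    calc g2⁻¹ * g3 * g2 = g3 * (g3⁻¹ * g2⁻¹ * g3 * g2) := by group
      _ = g3 * (g4 ^ t234 * g5 ^ t235) := by rw [h32]
  -- swapping powers of g4 past powers of g2 and g3
  have swap42 : ∀ m n : ℤ, g4 ^ m * g2 ^ n = g2 ^ n * (g4 ^ m * g5 ^ (t245 * (m * n))) := by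
    intro m n
    have h := swap_zpow r42 (C45.zpow_right t245) (C25.zpow_right t245) m n
    rw [h, ← zpow_mul]
  have swap43 : ∀ m n : ℤ, g4 ^ m * g3 ^ n = g3 ^ n * (g4 ^ m * g5 ^ (t345 * (m * n))) := by
    intro m n
    have h := swap_zpow r43 (C45.zpow_right t345) (C35.zpow_right t345) m n
    rw [h, ← zpow_mul]
  -- powers of (g3 * g4^T * g5^F)
  have powB : ∀ (T F m : ℤ), (g3 * (g4 ^ T * g5 ^ F)) ^ m
      = g3 ^ m * (g4 ^ (m*T) * g5 ^ (m*F + s2 m * (T * t345))) := by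
    intro T F m
    induction m using Int.induction_on with
    | zero => simp [s2_zero]
    | succ i ih =>
        calc (g3 * (g4 ^ T * g5 ^ F)) ^ (↑i+1:ℤ)
            = (g3 * (g4 ^ T * g5 ^ F)) ^ (↑i:ℤ) * (g3 * (g4 ^ T * g5 ^ F)) := by
              rw [zpow_add_one]
          _ = (g3 ^ (↑i:ℤ) * (g4 ^ ((↑i:ℤ)*T) * g5 ^ ((↑i:ℤ)*F + s2 ↑i * (T*t345))))
                * (g3 * (g4 ^ T * g5 ^ F)) := by rw [ih]
          _ = g3 ^ (↑i:ℤ) * (g4 ^ ((↑i:ℤ)*T)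
                * ((g5 ^ ((↑i:ℤ)*F + s2 ↑i * (T*t345)) * g3 ^ (1:ℤ)) * (g4 ^ T * g5 ^ F))) := by
              group
          _ = g3 ^ (↑i:ℤ) * (g4 ^ ((↑i:ℤ)*T)
                * ((g3 ^ (1:ℤ) * g5 ^ ((↑i:ℤ)*F + s2 ↑i * (T*t345))) * (g4 ^ T * g5 ^ F))) := by
              rw [c53zz]
          _ = g3 ^ (↑i:ℤ) * ((g4 ^ ((↑i:ℤ)*T) * g3 ^ (1:ℤ))
                * ((g5 ^ ((↑i:ℤ)*F + s2 ↑i * (T*t345)) * g4 ^ T) * g5 ^ F)) := by group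
          _ = g3 ^ (↑i:ℤ) * ((g3 ^ (1:ℤ) * (g4 ^ ((↑i:ℤ)*T) * g5 ^ (t345 * ((↑i:ℤ)*T * 1))))
                * ((g5 ^ ((↑i:ℤ)*F + s2 ↑i * (T*t345)) * g4 ^ T) * g5 ^ F)) := by
              rw [swap43]
          _ = g3 ^ (↑i:ℤ) * (g3 ^ (1:ℤ) * (g4 ^ ((↑i:ℤ)*T)
                * ((g5 ^ (t345 * ((↑i:ℤ)*T * 1) + ((↑i:ℤ)*F + s2 ↑i * (T*t345))) * g4 ^ T)
                  * g5 ^ F))) := by group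
          _ = g3 ^ (↑i:ℤ) * (g3 ^ (1:ℤ) * (g4 ^ ((↑i:ℤ)*T)
                * ((g4 ^ T * g5 ^ (t345 * ((↑i:ℤ)*T * 1) + ((↑i:ℤ)*F + s2 ↑i * (T*t345))))
                  * g5 ^ F))) := by rw [c54zz]
          _ = g3 ^ ((↑i:ℤ)+1) * (g4 ^ ((↑i:ℤ)*T + T)
                * g5 ^ (t345 * ((↑i:ℤ)*T * 1) + ((↑i:ℤ)*F + s2 ↑i * (T*t345)) + F)) := by
              group
          _ = g3 ^ ((↑i:ℤ)+1) * (g4 ^ (((↑i:ℤ)+1)*T)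
                * g5 ^ (((↑i:ℤ)+1)*F + s2 ((↑i:ℤ)+1) * (T*t345))) := by
              rw [show t345 * ((↑i:ℤ)*T * 1) + ((↑i:ℤ)*F + s2 ↑i * (T*t345)) + F
                    = ((↑i:ℤ)+1)*F + s2 ((↑i:ℤ)+1) * (T*t345) from by
                  rw [s2_add_one]; ring,
                show (↑i:ℤ)*T + T = ((↑i:ℤ)+1)*T by ring]
    | pred i ih =>
        have hs : s2 (-(↑i:ℤ)) = s2 (-(↑i:ℤ)-1) + (-(↑i:ℤ)-1) := by
          have h := s2_add_one (-(↑i:ℤ)-1)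
          rw [show (-(↑i:ℤ)-1+1) = -(↑i:ℤ) by ring] at h
          exact h
        calc (g3 * (g4 ^ T * g5 ^ F)) ^ (-(↑i:ℤ)-1)
            = (g3 * (g4 ^ T * g5 ^ F)) ^ (-(↑i:ℤ)) * (g3 * (g4 ^ T * g5 ^ F))⁻¹ := by
              rw [zpow_sub_one]
          _ = (g3 ^ (-(↑i:ℤ)) * (g4 ^ (-(↑i:ℤ)*T) * g5 ^ (-(↑i:ℤ)*F + s2 (-(↑i:ℤ)) * (T*t345))))
                * (g3 * (g4 ^ T * g5 ^ F))⁻¹ := by rw [ih]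
          _ = g3 ^ (-(↑i:ℤ)) * (g4 ^ (-(↑i:ℤ)*T)
                * ((g5 ^ ((-(↑i:ℤ)*F + s2 (-(↑i:ℤ)) * (T*t345)) - F) * g4 ^ (-T)) * g3 ^ (-1:ℤ))) := by
              group
          _ = g3 ^ (-(↑i:ℤ)) * (g4 ^ (-(↑i:ℤ)*T)
                * ((g4 ^ (-T) * g5 ^ ((-(↑i:ℤ)*F + s2 (-(↑i:ℤ)) * (T*t345)) - F)) * g3 ^ (-1:ℤ))) := by
              rw [c54zz]
          _ = g3 ^ (-(↑i:ℤ)) * (g4 ^ (-(↑i:ℤ)*T) * (g4 ^ (-T)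
                * (g5 ^ ((-(↑i:ℤ)*F + s2 (-(↑i:ℤ)) * (T*t345)) - F) * g3 ^ (-1:ℤ)))) := by
              group
          _ = g3 ^ (-(↑i:ℤ)) * (g4 ^ (-(↑i:ℤ)*T) * (g4 ^ (-T)
                * (g3 ^ (-1:ℤ) * g5 ^ ((-(↑i:ℤ)*F + s2 (-(↑i:ℤ)) * (T*t345)) - F)))) := by
              rw [c53zz]
          _ = g3 ^ (-(↑i:ℤ)) * ((g4 ^ (-(↑i:ℤ)*T + -T)
                * g3 ^ (-1:ℤ)) * g5 ^ ((-(↑i:ℤ)*F + s2 (-(↑i:ℤ)) * (T*t345)) - F)) := by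
              group
          _ = g3 ^ (-(↑i:ℤ)) * ((g3 ^ (-1:ℤ) * (g4 ^ (-(↑i:ℤ)*T + -T)
                * g5 ^ (t345 * ((-(↑i:ℤ)*T + -T) * -1))))
                * g5 ^ ((-(↑i:ℤ)*F + s2 (-(↑i:ℤ)) * (T*t345)) - F)) := by
              rw [swap43]
          _ = g3 ^ (-(↑i:ℤ)+ -1) * (g4 ^ (-(↑i:ℤ)*T + -T)
                * g5 ^ (t345 * ((-(↑i:ℤ)*T + -T) * -1)
                    + ((-(↑i:ℤ)*F + s2 (-(↑i:ℤ)) * (T*t345)) - F))) := by group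
          _ = g3 ^ (-(↑i:ℤ)-1) * (g4 ^ ((-(↑i:ℤ)-1)*T)
                * g5 ^ ((-(↑i:ℤ)-1)*F + s2 (-(↑i:ℤ)-1) * (T*t345))) := by
              rw [show (-(↑i:ℤ)+ -1) = (-(↑i:ℤ)-1) by ring,
                show (-(↑i:ℤ)*T + -T) = (-(↑i:ℤ)-1)*T by ring,
                show t345 * (((-(↑i:ℤ)-1)*T) * -1)
                    + ((-(↑i:ℤ)*F + s2 (-(↑i:ℤ)) * (T*t345)) - F)
                    = (-(↑i:ℤ)-1)*F + s2 (-(↑i:ℤ)-1) * (T*t345) from by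
                  rw [hs]; ring]
  -- conjugation of g3^m by g2
  have C1 : ∀ m : ℤ, g2⁻¹ * g3 ^ m * g2
      = g3 ^ m * (g4 ^ (m*t234) * g5 ^ (m*t235 + s2 m * (t234*t345))) := by
    intro m
    rw [conj_zpow', r32, powB]
  have conj42z : ∀ K : ℤ, g2⁻¹ * g4 ^ K * g2 = g4 ^ K * g5 ^ (t245*K) := by
    intro K
    rw [conj_zpow', r42, (C45.zpow_right t245).mul_zpow, ← zpow_mul]
  have conj52 : ∀ E : ℤ, g2⁻¹ * g5 ^ E * g2 = g5 ^ E := by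
    intro E
    calc g2⁻¹ * g5 ^ E * g2 = g2⁻¹ * (g5 ^ E * g2 ^ (1:ℤ)) := by group
      _ = g2⁻¹ * (g2 ^ (1:ℤ) * g5 ^ E) := by rw [c52zz]
      _ = g5 ^ E := by group
  have conj2 : ∀ B K E : ℤ, g2⁻¹ * (g3 ^ B * (g4 ^ K * g5 ^ E)) * g2
      = g3 ^ B * (g4 ^ (K + B*t234) * g5 ^ (E + (B*t235 + s2 B * (t234*t345)) + t245*K)) := by
    intro B K E
    calc g2⁻¹ * (g3 ^ B * (g4 ^ K * g5 ^ E)) * g2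
        = (g2⁻¹ * g3 ^ B * g2) * ((g2⁻¹ * g4 ^ K * g2) * (g2⁻¹ * g5 ^ E * g2)) := by group
      _ = (g3 ^ B * (g4 ^ (B*t234) * g5 ^ (B*t235 + s2 B * (t234*t345))))
            * ((g4 ^ K * g5 ^ (t245*K)) * g5 ^ E) := by rw [C1, conj42z, conj52]
      _ = g3 ^ B * (g4 ^ (B*t234)
            * ((g5 ^ (B*t235 + s2 B * (t234*t345)) * g4 ^ K) * g5 ^ (t245*K + E))) := by group
      _ = g3 ^ B * (g4 ^ (B*t234)
            * ((g4 ^ K * g5 ^ (B*t235 + s2 B * (t234*t345))) * g5 ^ (t245*K + E))) := by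
          rw [c54zz]
      _ = g3 ^ B * (g4 ^ (B*t234 + K)
            * g5 ^ ((B*t235 + s2 B * (t234*t345)) + (t245*K + E))) := by group
      _ = g3 ^ B * (g4 ^ (K + B*t234)
            * g5 ^ (E + (B*t235 + s2 B * (t234*t345)) + t245*K)) := by
          rw [show B*t234 + K = K + B*t234 by ring,
            show (B*t235 + s2 B * (t234*t345)) + (t245*K + E)
                = E + (B*t235 + s2 B * (t234*t345)) + t245*K by ring]
  have conj2' : ∀ B K E : ℤ, g2 * (g3 ^ B * (g4 ^ K * g5 ^ E)) * g2⁻¹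
      = g3 ^ B * (g4 ^ (K - B*t234)
          * g5 ^ (E - (B*t235 + s2 B * (t234*t345)) - t245*(K - B*t234))) := by
    intro B K E
    have h := conj2 B (K - B*t234) (E - (B*t235 + s2 B * (t234*t345)) - t245*(K - B*t234))
    rw [show K - B*t234 + B*t234 = K by ring] at h
    rw [show E - (B*t235 + s2 B * (t234*t345)) - t245*(K - B*t234)
        + (B*t235 + s2 B * (t234*t345)) + t245*(K - B*t234) = E by ring] at h
    rw [← h]; group
  have conjn2 : ∀ n : ℤ, ∀ B K E : ℤ, g2 ^ (-n) * (g3 ^ B * (g4 ^ K * g5 ^ E)) * g2 ^ n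
      = g3 ^ B * (g4 ^ (K + B*t234*n)
          * g5 ^ (E + (B*t235 + s2 B * (t234*t345))*n + t245*(K*n + B*t234*(s2 n)))) := by
    intro n
    induction n using Int.induction_on with
    | zero =>
        intro B K E
        simp [s2_zero]
    | succ i ih =>
        intro B K E
        calc g2 ^ (-(↑i+1):ℤ) * (g3 ^ B * (g4 ^ K * g5 ^ E)) * g2 ^ (↑i+1:ℤ)
            = g2⁻¹ * (g2 ^ (-↑i:ℤ) * (g3 ^ B * (g4 ^ K * g5 ^ E)) * g2 ^ (↑i:ℤ)) * g2 := by
              group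
          _ = g2⁻¹ * (g3 ^ B * (g4 ^ (K + B*t234*↑i)
                * g5 ^ (E + (B*t235 + s2 B * (t234*t345))*↑i
                    + t245*(K*↑i + B*t234*(s2 ↑i))))) * g2 := by rw [ih]
          _ = g3 ^ B * (g4 ^ ((K + B*t234*↑i) + B*t234)
                * g5 ^ ((E + (B*t235 + s2 B * (t234*t345))*↑i + t245*(K*↑i + B*t234*(s2 ↑i)))
                    + (B*t235 + s2 B * (t234*t345)) + t245*(K + B*t234*↑i))) := by
              rw [conj2]
          _ = g3 ^ B * (g4 ^ (K + B*t234*(↑i+1))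
                * g5 ^ (E + (B*t235 + s2 B * (t234*t345))*(↑i+1)
                    + t245*(K*(↑i+1) + B*t234*(s2 (↑i+1))))) := by
              rw [show (K + B*t234*(↑i:ℤ)) + B*t234 = K + B*t234*((↑i:ℤ)+1) by ring,
                show (E + (B*t235 + s2 B * (t234*t345))*(↑i:ℤ) + t245*(K*(↑i:ℤ) + B*t234*(s2 ↑i)))
                    + (B*t235 + s2 B * (t234*t345)) + t245*(K + B*t234*(↑i:ℤ))
                    = E + (B*t235 + s2 B * (t234*t345))*((↑i:ℤ)+1)
                      + t245*(K*((↑i:ℤ)+1) + B*t234*(s2 ((↑i:ℤ)+1))) from by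
                  rw [s2_add_one]; ring]
    | pred i ih =>
        intro B K E
        have hs : s2 (-(↑i:ℤ)) = s2 (-(↑i:ℤ)-1) + (-(↑i:ℤ)-1) := by
          have h := s2_add_one (-(↑i:ℤ)-1)
          rw [show (-(↑i:ℤ)-1+1) = -(↑i:ℤ) by ring] at h
          exact h
        calc g2 ^ (-(-↑i-1):ℤ) * (g3 ^ B * (g4 ^ K * g5 ^ E)) * g2 ^ (-↑i-1:ℤ)
            = g2 * (g2 ^ (-(-↑i):ℤ) * (g3 ^ B * (g4 ^ K * g5 ^ E)) * g2 ^ (-↑i:ℤ)) * g2⁻¹ := by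
              group
          _ = g2 * (g3 ^ B * (g4 ^ (K + B*t234*(-↑i))
                * g5 ^ (E + (B*t235 + s2 B * (t234*t345))*(-↑i)
                    + t245*(K*(-↑i) + B*t234*(s2 (-↑i)))))) * g2⁻¹ := by rw [ih]
          _ = g3 ^ B * (g4 ^ ((K + B*t234*(-↑i)) - B*t234)
                * g5 ^ ((E + (B*t235 + s2 B * (t234*t345))*(-↑i)
                    + t245*(K*(-↑i) + B*t234*(s2 (-↑i))))
                  - (B*t235 + s2 B * (t234*t345))
                  - t245*((K + B*t234*(-↑i)) - B*t234))) := by rw [conj2']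
          _ = g3 ^ B * (g4 ^ (K + B*t234*(-↑i-1))
                * g5 ^ (E + (B*t235 + s2 B * (t234*t345))*(-↑i-1)
                    + t245*(K*(-↑i-1) + B*t234*(s2 (-↑i-1))))) := by
              rw [show (E + (B*t235 + s2 B * (t234*t345))*(-(↑i:ℤ))
                      + t245*(K*(-(↑i:ℤ)) + B*t234*(s2 (-(↑i:ℤ)))))
                    - (B*t235 + s2 B * (t234*t345))
                    - t245*((K + B*t234*(-(↑i:ℤ))) - B*t234)
                    = E + (B*t235 + s2 B * (t234*t345))*(-(↑i:ℤ)-1)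
                      + t245*(K*(-(↑i:ℤ)-1) + B*t234*(s2 (-(↑i:ℤ)-1))) from by
                  rw [hs]; ring,
                show (K + B*t234*(-(↑i:ℤ))) - B*t234 = K + B*t234*(-(↑i:ℤ)-1) by ring]
  -- swapping g3^B past g2^a
  have h32a : ∀ B a : ℤ, g3 ^ B * g2 ^ a
      = g2 ^ a * (g3 ^ B * (g4 ^ (B*t234*a)
          * g5 ^ ((B*t235 + s2 B * (t234*t345))*a + t245*(B*t234*(s2 a))))) := by
    intro B a
    have h := conjn2 a B 0 0
    calc g3 ^ B * g2 ^ a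
        = g2 ^ a * (g2 ^ (-a) * (g3 ^ B * (g4 ^ (0:ℤ) * g5 ^ (0:ℤ))) * g2 ^ a) := by group
      _ = g2 ^ a * (g3 ^ B * (g4 ^ ((0:ℤ) + B*t234*a)
            * g5 ^ ((0:ℤ) + (B*t235 + s2 B * (t234*t345))*a + t245*((0:ℤ)*a + B*t234*(s2 a))))) := by
          rw [h]
      _ = g2 ^ a * (g3 ^ B * (g4 ^ (B*t234*a)
            * g5 ^ ((B*t235 + s2 B * (t234*t345))*a + t245*(B*t234*(s2 a))))) := by
          rw [show (0:ℤ) + B*t234*a = B*t234*a by ring,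
            show (0:ℤ) + (B*t235 + s2 B * (t234*t345))*a + t245*((0:ℤ)*a + B*t234*(s2 a))
                = (B*t235 + s2 B * (t234*t345))*a + t245*(B*t234*(s2 a)) by ring]
  -- exponent congruence helper
  have congr4 : ∀ p1 p2 p3 p4 q1 q2 q3 q4 : ℤ, p1 = q1 → p2 = q2 → p3 = q3 → p4 = q4 →
      g2 ^ p1 * g3 ^ p2 * g4 ^ p3 * g5 ^ p4 = g2 ^ q1 * g3 ^ q2 * g4 ^ q3 * g5 ^ q4 := by
    intro p1 p2 p3 p4 q1 q2 q3 q4 e1 e2 e3 e4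
    rw [e1, e2, e3, e4]
  -- the general multiplication formula for normal forms
  have mulNF : ∀ A B C D a b c d : ℤ,
      (g2 ^ A * g3 ^ B * g4 ^ C * g5 ^ D) * (g2 ^ a * g3 ^ b * g4 ^ c * g5 ^ d)
      = g2 ^ (A+a) * g3 ^ (B+b) * g4 ^ (C + c + B*t234*a)
        * g5 ^ (D + d + t245*(C*a)
            + ((B*t235 + s2 B * (t234*t345))*a + t245*(B*t234*(s2 a)))
            + t345*((B*t234*a + C)*b)) := by
    intro A B C D a b c d
    calc (g2 ^ A * g3 ^ B * g4 ^ C * g5 ^ D) * (g2 ^ a * g3 ^ b * g4 ^ c * g5 ^ d)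
        = g2 ^ A * (g3 ^ B * (g4 ^ C * ((g5 ^ D * g2 ^ a) * (g3 ^ b * (g4 ^ c * g5 ^ d))))) := by
          group
      _ = g2 ^ A * (g3 ^ B * (g4 ^ C * ((g2 ^ a * g5 ^ D) * (g3 ^ b * (g4 ^ c * g5 ^ d))))) := by
          rw [c52zz]
      _ = g2 ^ A * (g3 ^ B * ((g4 ^ C * g2 ^ a) * (g5 ^ D * (g3 ^ b * (g4 ^ c * g5 ^ d))))) := by
          group
      _ = g2 ^ A * (g3 ^ B * ((g2 ^ a * (g4 ^ C * g5 ^ (t245*(C*a))))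
            * (g5 ^ D * (g3 ^ b * (g4 ^ c * g5 ^ d))))) := by rw [swap42]
      _ = g2 ^ A * ((g3 ^ B * g2 ^ a)
            * (g4 ^ C * ((g5 ^ (t245*(C*a) + D) * g3 ^ b) * (g4 ^ c * g5 ^ d)))) := by group
      _ = g2 ^ A * ((g2 ^ a * (g3 ^ B * (g4 ^ (B*t234*a)
            * g5 ^ ((B*t235 + s2 B * (t234*t345))*a + t245*(B*t234*(s2 a))))))
            * (g4 ^ C * ((g5 ^ (t245*(C*a) + D) * g3 ^ b) * (g4 ^ c * g5 ^ d)))) := by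
          rw [h32a]
      _ = g2 ^ A * ((g2 ^ a * (g3 ^ B * (g4 ^ (B*t234*a)
            * g5 ^ ((B*t235 + s2 B * (t234*t345))*a + t245*(B*t234*(s2 a))))))
            * (g4 ^ C * ((g3 ^ b * g5 ^ (t245*(C*a) + D)) * (g4 ^ c * g5 ^ d)))) := by
          rw [c53zz]
      _ = (g2 ^ A * g2 ^ a) * (g3 ^ B * (g4 ^ (B*t234*a)
            * ((g5 ^ (((B*t235 + s2 B * (t234*t345))*a + t245*(B*t234*(s2 a)))) * g4 ^ C)
              * ((g3 ^ b * g5 ^ (t245*(C*a) + D)) * (g4 ^ c * g5 ^ d))))) := by group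
      _ = (g2 ^ A * g2 ^ a) * (g3 ^ B * (g4 ^ (B*t234*a)
            * ((g4 ^ C * g5 ^ (((B*t235 + s2 B * (t234*t345))*a + t245*(B*t234*(s2 a)))))
              * ((g3 ^ b * g5 ^ (t245*(C*a) + D)) * (g4 ^ c * g5 ^ d))))) := by rw [c54zz]
      _ = (g2 ^ A * g2 ^ a) * (g3 ^ B * (g4 ^ (B*t234*a) * (g4 ^ C
            * ((g5 ^ (((B*t235 + s2 B * (t234*t345))*a + t245*(B*t234*(s2 a)))) * g3 ^ b)
              * (g5 ^ (t245*(C*a) + D) * (g4 ^ c * g5 ^ d)))))) := by group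
      _ = (g2 ^ A * g2 ^ a) * (g3 ^ B * (g4 ^ (B*t234*a) * (g4 ^ C
            * ((g3 ^ b * g5 ^ (((B*t235 + s2 B * (t234*t345))*a + t245*(B*t234*(s2 a)))))
              * (g5 ^ (t245*(C*a) + D) * (g4 ^ c * g5 ^ d)))))) := by rw [c53zz]
      _ = (g2 ^ A * g2 ^ a) * (g3 ^ B * ((g4 ^ (B*t234*a + C) * g3 ^ b)
            * ((g5 ^ ((((B*t235 + s2 B * (t234*t345))*a + t245*(B*t234*(s2 a))))
              + (t245*(C*a) + D)) * g4 ^ c) * g5 ^ d))) := by group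
      _ = (g2 ^ A * g2 ^ a) * (g3 ^ B * ((g3 ^ b * (g4 ^ (B*t234*a + C)
            * g5 ^ (t345 * ((B*t234*a + C) * b))))
            * ((g4 ^ c * g5 ^ ((((B*t235 + s2 B * (t234*t345))*a + t245*(B*t234*(s2 a))))
              + (t245*(C*a) + D))) * g5 ^ d))) := by
          rw [swap43, c54zz]
      _ = (g2 ^ A * g2 ^ a) * ((g3 ^ B * g3 ^ b) * (g4 ^ (B*t234*a + C)
            * ((g5 ^ (t345 * ((B*t234*a + C) * b)) * g4 ^ c)
              * g5 ^ (((((B*t235 + s2 B * (t234*t345))*a + t245*(B*t234*(s2 a))))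
                + (t245*(C*a) + D)) + d)))) := by group
      _ = (g2 ^ A * g2 ^ a) * ((g3 ^ B * g3 ^ b) * (g4 ^ (B*t234*a + C)
            * ((g4 ^ c * g5 ^ (t345 * ((B*t234*a + C) * b)))
              * g5 ^ (((((B*t235 + s2 B * (t234*t345))*a + t245*(B*t234*(s2 a))))
                + (t245*(C*a) + D)) + d)))) := by rw [c54zz]
      _ = g2 ^ (A+a) * (g3 ^ (B+b) * (g4 ^ ((B*t234*a + C) + c)
            * g5 ^ (t345 * ((B*t234*a + C) * b)
              + (((((B*t235 + s2 B * (t234*t345))*a + t245*(B*t234*(s2 a))))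
                + (t245*(C*a) + D)) + d)))) := by group
      _ = g2 ^ (A+a) * g3 ^ (B+b) * g4 ^ (C + c + B*t234*a)
            * g5 ^ (D + d + t245*(C*a)
              + ((B*t235 + s2 B * (t234*t345))*a + t245*(B*t234*(s2 a)))
              + t345*((B*t234*a + C)*b)) := by
          rw [show (B*t234*a + C) + c = C + c + B*t234*a by ring,
            show t345 * ((B*t234*a + C) * b)
                + (((((B*t235 + s2 B * (t234*t345))*a + t245*(B*t234*(s2 a))))
                  + (t245*(C*a) + D)) + d)
                = D + d + t245*(C*a)
                  + ((B*t235 + s2 B * (t234*t345))*a + t245*(B*t234*(s2 a)))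
                  + t345*((B*t234*a + C)*b) by ring]
          group
  -- main induction
  intro a2 a3 a4 a5 x
  induction x with
  | zero => simp [s2_zero]
  | succ n ih =>
      rw [pow_succ, ih, mulNF]
      refine congr4 _ _ _ _ _ _ _ _ ?_ ?_ ?_ ?_
      · push_cast; ring
      · push_cast; ring
      · push_cast
        rw [s2_add_one]
        ring
      · push_cast
        obtain ⟨q, hq⟩ := six_dvd (n:ℤ) a2 a3 t234 t245 t345
        obtain ⟨q', hq'⟩ := six_dvd ((n:ℤ)+1) a2 a3 t234 t245 t345
        rw [hq, hq', Int.mul_ediv_cancel_left q (by norm_num),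
          Int.mul_ediv_cancel_left q' (by norm_num)]
        apply mul_left_cancel₀ (show (12:ℤ) ≠ 0 by norm_num)
        linear_combination (2:ℤ) * hq' - (2:ℤ) * hq
          + (-(a2^2*a3*t234*t245) - 2*a2^2*a3*t234*t245*(n:ℤ) - 5*a2*a3^2*t234*t345
             - 4*a2*a3^2*t234*t345*(n:ℤ) + 3*a2*a3*t234*t245 + 3*a2*a3*t234*t345
             - 6*a2*a3*t235 - 6*a2*a4*t245 - 6*a3*a4*t345) * two_mul_s2 ((n:ℤ)+1)
          + (5*a2^2*a3*t234*t245 + 2*a2^2*a3*t234*t245*(n:ℤ) + 7*a2*a3^2*t234*t345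
             + 4*a2*a3^2*t234*t345*(n:ℤ) - 3*a2*a3*t234*t245 - 3*a2*a3*t234*t345
             + 6*a2*a3*t235 + 6*a2*a4*t245 + 6*a3*a4*t345) * two_mul_s2 (n:ℤ)
          + (6*(n:ℤ)*a3*t234*t245) * two_mul_s2 a2
          + (6*a2*t234*t345) * two_mul_s2 ((n:ℤ)*a3)
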